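/- (Regularized integration by parts.) Let ρ : ℝ → ℝ be a C^∞ function supported on [−1,1] with ∫ρ(s) ds = 1. Let ϑ : ℝ → ℝ be a C² function and let g : ℝ → ℂ be continuous with compact support. Assume that ϑ'(s) ≠ 0 for all s in a neighborhood of the support of g. Then for all sufficiently small ε > 0 one has ∫ e^{iϑ(s)} g(s) ds = i ∫ e^{iϑ(s)} (g_ε/ϑ')'(s) ds + ∫ e^{iϑ(s)} (g(s) − g_ε(s)) ds, where g_ε := ρ_ε * g with ρ_ε(s) := ε^{-1} ρ(ε^{-1}s). -/

import Mathlib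

open MeasureTheory Metric Set Filter Complex
open scoped Convolution Topology

noncomputable section

set_option maxHeartbeats 1000000 in
/-- regularized integration by parts. -/
theorem regularized_integration_by_parts
    (ρ : ℝ → ℝ) (hρ : ContDiff ℝ (⊤ : ℕ∞) ρ)
    (hρsupp : tsupport ρ ⊆ Set.Icc (-1) 1)
    (hρint : ∫ s : ℝ, ρ s = 1)
    (ϑ : ℝ → ℝ) (hϑ : ContDiff ℝ 2 ϑ)
    (g : ℝ → ℂ) (hg : Continuous g) (hgc : HasCompactSupport g)
    (U : Set ℝ) (hU : IsOpen U) (hgU : tsupport g ⊆ U)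
    (hϑ' : ∀ s ∈ U, deriv ϑ s ≠ 0) :
    ∃ ε₀ > (0 : ℝ), ∀ ε : ℝ, 0 < ε → ε < ε₀ →
      (∫ s : ℝ, Complex.exp (Complex.I * (ϑ s : ℂ)) * g s) =
        Complex.I * (∫ s : ℝ, Complex.exp (Complex.I * (ϑ s : ℂ)) *
          deriv (fun s' : ℝ =>
            (∫ t : ℝ, ((ε⁻¹ * ρ (ε⁻¹ * (s' - t)) : ℝ) : ℂ) * g t) / ((deriv ϑ s' : ℝ) : ℂ)) s)
        + ∫ s : ℝ, Complex.exp (Complex.I * (ϑ s : ℂ)) *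
            (g s - ∫ t : ℝ, ((ε⁻¹ * ρ (ε⁻¹ * (s - t)) : ℝ) : ℂ) * g t) := by
  obtain ⟨δ, hδpos, hδU⟩ := hgc.exists_thickening_subset_open hU hgU
  refine ⟨δ/2, by positivity, ?_⟩
  intro ε hε hεδ
  set L : ℝ →L[ℝ] ℂ →L[ℝ] ℂ := ContinuousLinearMap.lsmul ℝ ℝ with hLdef
  set ρε : ℝ → ℝ := fun s => ε⁻¹ * ρ (ε⁻¹ * s) with hρεdef
  set gε : ℝ → ℂ := ρε ⋆[L] g with hgεdef
  -- basic facts about ϑ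
  have hϑ1 : ContDiff ℝ 1 (deriv ϑ) := by
    have h2 : ContDiff ℝ ((1 : ℕ) + 1) ϑ := by exact_mod_cast hϑ
    exact (contDiff_succ_iff_deriv.mp h2).2.2
  have hϑdiff : Differentiable ℝ ϑ := hϑ.differentiable (by norm_num)
  -- properties of ρε
  have hρεc : ContDiff ℝ (1 : ℕ∞) ρε :=
    contDiff_const.mul ((hρ.of_le (by exact_mod_cast le_top)).comp
      (contDiff_const.mul contDiff_id))
  have hρεsupp : Function.support ρε ⊆ Icc (-ε) ε := by
    intro s hs
    have h0 : ρ (ε⁻¹ * s) ≠ 0 := by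
      intro h; exact hs (by simp [hρεdef, h])
    have h1 : ε⁻¹ * s ∈ Icc (-1 : ℝ) 1 := hρsupp (subset_tsupport ρ h0)
    have hc : ε * ε⁻¹ = 1 := mul_inv_cancel₀ hε.ne'
    have hs' : s = ε * (ε⁻¹ * s) := by
      field_simp
    constructor
    · nlinarith [mul_le_mul_of_nonneg_left h1.1 hε.le]
    · nlinarith [mul_le_mul_of_nonneg_left h1.2 hε.le]
  have hρεcs : HasCompactSupport ρε := by
    apply HasCompactSupport.intro (isCompact_Icc (a := -ε) (b := ε))
    intro x hx
    by_contra h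
    exact hx (hρεsupp h)
  have hgl : LocallyIntegrable g := hg.locallyIntegrable
  have hgεsm : ContDiff ℝ (1 : ℕ∞) gε := hρεcs.contDiff_convolution_left L hρεc hgl
  -- support of gε
  have hgεsupp : tsupport gε ⊆ U := by
    have h1 : Function.support gε ⊆ cthickening ε (tsupport g) := by
      intro x hx
      have hmem := support_convolution_subset (L := L) (f := ρε) (g := g) (μ := volume) hx
      rw [Set.mem_add] at hmem
      obtain ⟨a, ha, b, hb, rfl⟩ := hmem
      have ha' : a ∈ Icc (-ε) ε := hρεsupp ha
      have hb' : b ∈ tsupport g := subset_tsupport g hb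
      refine mem_cthickening_of_dist_le (a + b) b ε _ hb' ?_
      rw [dist_eq_norm]
      simp only [add_sub_cancel_right, Real.norm_eq_abs]
      exact abs_le.mpr ⟨ha'.1, ha'.2⟩
    have h2 : tsupport gε ⊆ cthickening ε (tsupport g) :=
      closure_minimal h1 isClosed_cthickening
    refine h2.trans (Set.Subset.trans ?_ hδU)
    exact cthickening_subset_thickening' hδpos (by linarith) _
  have hgεc : HasCompactSupport gε := by
    refine IsCompact.of_isClosed_subset (IsCompact.cthickening (r := ε) hgc)
      (isClosed_tsupport _) ?_
    refine closure_minimal ?_ isClosed_cthickening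
    intro x hx
    have hmem := support_convolution_subset (L := L) (f := ρε) (g := g) (μ := volume) hx
    rw [Set.mem_add] at hmem
    obtain ⟨a, ha, b, hb, rfl⟩ := hmem
    have ha' : a ∈ Icc (-ε) ε := hρεsupp ha
    refine mem_cthickening_of_dist_le (a + b) b ε _ (subset_tsupport g hb) ?_
    rw [dist_eq_norm]
    simp only [add_sub_cancel_right, Real.norm_eq_abs]
    exact abs_le.mpr ⟨ha'.1, ha'.2⟩
  -- the convolution integral in the statement equals gε
  have hconv : ∀ x : ℝ,
      (∫ t : ℝ, ((ε⁻¹ * ρ (ε⁻¹ * (x - t)) : ℝ) : ℂ) * g t) = gε x := by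
    intro x
    have hswap : gε x = ∫ t : ℝ, ρε (x - t) • g t := by
      rw [hgεdef, convolution_eq_swap]
      simp only [hLdef, ContinuousLinearMap.lsmul_apply]
    rw [hswap]
    simp_rw [hρεdef, Complex.real_smul]
  set h : ℝ → ℂ := fun s => gε s / ((deriv ϑ s : ℝ) : ℂ) with hhdef
  have hstmt : (fun s' : ℝ =>
      (∫ t : ℝ, ((ε⁻¹ * ρ (ε⁻¹ * (s' - t)) : ℝ) : ℂ) * g t) / ((deriv ϑ s' : ℝ) : ℂ)) = h := by
    funext x; rw [hconv x]
  -- h is C¹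
  have hcd : ContDiff ℝ 1 h := by
    rw [contDiff_iff_contDiffAt]
    intro x
    by_cases hx : x ∈ U
    · have h1 : ContDiffAt ℝ (1 : ℕ∞) (fun s : ℝ => ((deriv ϑ s : ℝ) : ℂ)) x :=
        (Complex.ofRealCLM.contDiff.comp hϑ1).contDiffAt
      have hne : ((deriv ϑ x : ℝ) : ℂ) ≠ 0 := Complex.ofReal_ne_zero.mpr (hϑ' x hx)
      have h2 := hgεsm.contDiffAt.mul (h1.inv hne)
      exact h2.congr_of_eventuallyEq
        (Filter.Eventually.of_forall fun y => div_eq_mul_inv _ _)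
    · have hx' : x ∉ tsupport gε := fun hmem => hx (hgεsupp hmem)
      have hev : h =ᶠ[𝓝 x] 0 := by
        filter_upwards [(isClosed_tsupport gε).isOpen_compl.mem_nhds hx'] with y hy
        simp [hhdef, image_eq_zero_of_notMem_tsupport hy]
      exact (contDiffAt_const (c := (0 : ℂ))).congr_of_eventuallyEq hev
  have hhsupp : tsupport h ⊆ tsupport gε := by
    refine closure_minimal ?_ (isClosed_tsupport _)
    intro x hx
    have : gε x ≠ 0 := by
      intro h0; exact hx (by simp [hhdef, h0])
    exact subset_tsupport gε this
  have hhcs : HasCompactSupport h :=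
    IsCompact.of_isClosed_subset hgεc (isClosed_tsupport _) hhsupp
  -- the exponential factor
  set eϑ : ℝ → ℂ := fun s => Complex.exp (Complex.I * (ϑ s : ℂ)) with heϑdef
  have heϑd : ∀ s : ℝ, HasDerivAt eϑ (Complex.I * Complex.ofReal (deriv ϑ s) * eϑ s) s := by
    intro s
    have h1 : HasDerivAt (fun y : ℝ => ((ϑ y : ℝ) : ℂ)) (Complex.ofReal (deriv ϑ s)) s :=
      HasDerivAt.ofReal_comp (hϑdiff s).hasDerivAt
    have h2 : HasDerivAt (fun y : ℝ => Complex.I * ((ϑ y : ℝ) : ℂ))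
        (Complex.I * Complex.ofReal (deriv ϑ s)) s := h1.const_mul Complex.I
    have h3 := h2.cexp
    convert h3 using 1
    ring
  have heϑcont : Continuous eϑ :=
    Complex.continuous_exp.comp (continuous_const.mul (Complex.continuous_ofReal.comp hϑ.continuous))
  -- the key derivative identity
  have hF : ∀ s : ℝ, HasDerivAt (fun y => eϑ y * h y)
      (Complex.I * eϑ s * gε s + eϑ s * deriv h s) s := by
    intro s
    by_cases hs : s ∈ U
    · have h2 : HasDerivAt h (deriv h s) s := (hcd.differentiable one_ne_zero s).hasDerivAt
      have h3 : HasDerivAt (fun y => eϑ y * h y)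
          (Complex.I * Complex.ofReal (deriv ϑ s) * eϑ s * h s + eϑ s * deriv h s) s :=
        (heϑd s).mul h2
      convert h3 using 1
      have hne : ((deriv ϑ s : ℝ) : ℂ) ≠ 0 := Complex.ofReal_ne_zero.mpr (hϑ' s hs)
      simp only [hhdef]
      field_simp
    · have hs' : s ∉ tsupport gε := fun hmem => hs (hgεsupp hmem)
      have hmem : (tsupport gε)ᶜ ∈ 𝓝 s := (isClosed_tsupport gε).isOpen_compl.mem_nhds hs'
      have hhz : h =ᶠ[𝓝 s] fun _ => (0 : ℂ) := by
        filter_upwards [hmem] with y hy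
        simp [hhdef, image_eq_zero_of_notMem_tsupport hy]
      have hFz : (fun y => eϑ y * h y) =ᶠ[𝓝 s] 0 := by
        filter_upwards [hhz] with y hy
        simp [hy]
      have hd0 : HasDerivAt (fun y => eϑ y * h y) 0 s :=
        (hasDerivAt_const s (0 : ℂ)).congr_of_eventuallyEq hFz
      have hgz : gε s = 0 := image_eq_zero_of_notMem_tsupport hs'
      have hdh : deriv h s = 0 := by
        rw [hhz.deriv_eq, deriv_const]
      convert hd0 using 1
      simp [hgz, hdh]
  -- integrability facts
  have hgεcont : Continuous gε := hgεsm.continuous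
  have hdh_cont : Continuous (deriv h) := hcd.continuous_deriv le_rfl
  have hdh_cs : HasCompactSupport (deriv h) := hhcs.deriv
  have hint1 : Integrable (fun s => Complex.I * eϑ s * gε s) := by
    apply Continuous.integrable_of_hasCompactSupport
    · exact (continuous_const.mul heϑcont).mul hgεcont
    · exact (hgεc.mul_left (f := fun s => Complex.I * eϑ s))
  have hint2 : Integrable (fun s => eϑ s * deriv h s) := by
    apply Continuous.integrable_of_hasCompactSupport
    · exact heϑcont.mul hdh_cont
    · exact hdh_cs.mul_left
  have hintF : Integrable (fun s => eϑ s * h s) := by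
    apply Continuous.integrable_of_hasCompactSupport
    · exact heϑcont.mul (hcd.continuous)
    · exact hhcs.mul_left
  have hintEg : Integrable (fun s => eϑ s * g s) := by
    apply Continuous.integrable_of_hasCompactSupport
    · exact heϑcont.mul hg
    · exact hgc.mul_left
  have hintEgε : Integrable (fun s => eϑ s * gε s) := by
    apply Continuous.integrable_of_hasCompactSupport
    · exact heϑcont.mul hgεcont
    · exact hgεc.mul_left
  -- integral of the derivative is zero
  have hzero : (∫ s : ℝ, (Complex.I * eϑ s * gε s + eϑ s * deriv h s)) = 0 :=
    integral_eq_zero_of_hasDerivAt_of_integrable hF (hint1.add hint2) hintF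
  rw [integral_add hint1 hint2] at hzero
  have hIB : (∫ s : ℝ, Complex.I * eϑ s * gε s) = Complex.I * ∫ s : ℝ, eϑ s * gε s := by
    simp_rw [mul_assoc]
    exact integral_const_mul _ _
  rw [hIB] at hzero
  -- B = I * C
  have hBC : (∫ s : ℝ, eϑ s * gε s) = Complex.I * ∫ s : ℝ, eϑ s * deriv h s := by
    have hsq : Complex.I * Complex.I = -1 := Complex.I_mul_I
    linear_combination (-Complex.I) * hzero + (∫ s : ℝ, eϑ s * gε s) * hsq
  -- now rewrite the goal
  simp_rw [hstmt, hconv]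
  have hsub : (∫ s : ℝ, eϑ s * (g s - gε s)) =
      (∫ s : ℝ, eϑ s * g s) - ∫ s : ℝ, eϑ s * gε s := by
    simp_rw [mul_sub]
    exact integral_sub hintEg hintEgε
  calc (∫ s : ℝ, eϑ s * g s)
      = (∫ s : ℝ, eϑ s * gε s) + ((∫ s : ℝ, eϑ s * g s) - ∫ s : ℝ, eϑ s * gε s) := by ring
    _ = Complex.I * (∫ s : ℝ, eϑ s * deriv h s) + ∫ s : ℝ, eϑ s * (g s - gε s) := by
        rw [hsub, hBC]
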